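/- Assume ψ is C², A₀, A₁, A₂ are C¹, and equations (E1) and (E2) hold at every point of ℝ × ℝ². Set V(s) := s^γ/(γ−1). Then at every point of ℝ × ℝ² the local energy balance holds: ∂_t( (ε^{2+2δ}/2) |D_tψ|² + (ε²/2)(|D₁ψ|² + |D₂ψ|²) + V(|ψ|²) ) = ε² ( ∂₁ Re(conj(D_tψ) D₁ψ) + ∂₂ Re(conj(D_tψ) D₂ψ) ). -/

import Mathlib

noncomputable section

/-- Spacetime points `(t, x₁, x₂) ∈ ℝ × ℝ²`. -/
abbrev Spt := ℝ × ℝ × ℝ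

/-- Partial derivative in the time variable. -/
def ptd {E : Type*} [NormedAddCommGroup E] [NormedSpace ℝ E] (f : Spt → E) (p : Spt) : E :=
  fderiv ℝ f p (1, 0, 0)

/-- Partial derivative in the first spatial variable. -/
def px1 {E : Type*} [NormedAddCommGroup E] [NormedSpace ℝ E] (f : Spt → E) (p : Spt) : E :=
  fderiv ℝ f p (0, 1, 0)

/-- Partial derivative in the second spatial variable. -/
def px2 {E : Type*} [NormedAddCommGroup E] [NormedSpace ℝ E] (f : Spt → E) (p : Spt) : E :=
  fderiv ℝ f p (0, 0, 1)

/-- Covariant time derivative `D_t ψ = ∂_t ψ − i ε⁻¹ A₀ ψ`. -/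
def Dt (ε : ℝ) (A₀ : Spt → ℝ) (ψ : Spt → ℂ) (p : Spt) : ℂ :=
  ptd ψ p - Complex.I * ((ε⁻¹ : ℝ) : ℂ) * ((A₀ p : ℝ) : ℂ) * ψ p

/-- Covariant derivative `D₁ ψ = ∂₁ ψ − i ε^{δ−1} A₁ ψ`. -/
def D1 (ε δ : ℝ) (A₁ : Spt → ℝ) (ψ : Spt → ℂ) (p : Spt) : ℂ :=
  px1 ψ p - Complex.I * ((ε ^ (δ - 1) : ℝ) : ℂ) * ((A₁ p : ℝ) : ℂ) * ψ p

/-- Covariant derivative `D₂ ψ = ∂₂ ψ − i ε^{δ−1} A₂ ψ`. -/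
def D2 (ε δ : ℝ) (A₂ : Spt → ℝ) (ψ : Spt → ℂ) (p : Spt) : ℂ :=
  px2 ψ p - Complex.I * ((ε ^ (δ - 1) : ℝ) : ℂ) * ((A₂ p : ℝ) : ℂ) * ψ p

open Complex
set_option maxHeartbeats 2000000


-- differentiability of directional derivative of a C² function
private lemma diff_pd {ψ : Spt → ℂ} (hψ : ContDiff ℝ 2 ψ) (v : Spt) (p : Spt) :
    DifferentiableAt ℝ (fun q => fderiv ℝ ψ q v) p := by
  have h : ContDiff ℝ 1 (fderiv ℝ ψ) := hψ.fderiv_right (le_refl _)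
  exact ((h.differentiable one_ne_zero) p).clm_apply (differentiableAt_const v)

private lemma pd_pd {ψ : Spt → ℂ} (hψ : ContDiff ℝ 2 ψ) (p v w : Spt) :
    fderiv ℝ (fun q => fderiv ℝ ψ q v) p w = fderiv ℝ (fderiv ℝ ψ) p w v := by
  have h : ContDiff ℝ 1 (fderiv ℝ ψ) := hψ.fderiv_right (le_refl _)
  rw [fderiv_clm_apply ((h.differentiable one_ne_zero) p) (differentiableAt_const v)]
  simp

private lemma pd_symm {ψ : Spt → ℂ} (hψ : ContDiff ℝ 2 ψ) (p v w : Spt) :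
    fderiv ℝ (fun q => fderiv ℝ ψ q v) p w = fderiv ℝ (fun q => fderiv ℝ ψ q w) p v := by
  rw [pd_pd hψ p v w, pd_pd hψ p w v]
  exact (hψ.contDiffAt.isSymmSndFDerivAt (by simp)) w v

private lemma pd_ofReal {g : Spt → ℝ} {p : Spt} (hg : DifferentiableAt ℝ g p) (v : Spt) :
    fderiv ℝ (fun q => ((g q : ℝ) : ℂ)) p v = ((fderiv ℝ g p v : ℝ) : ℂ) := by
  have h : HasFDerivAt (fun q => ((g q : ℝ) : ℂ))
      (Complex.ofRealCLM.comp (fderiv ℝ g p)) p :=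
    Complex.ofRealCLM.hasFDerivAt.comp p hg.hasFDerivAt
  rw [h.fderiv]; rfl

private lemma pd_conj {f : Spt → ℂ} {p : Spt} (hf : DifferentiableAt ℝ f p) (v : Spt) :
    fderiv ℝ (fun q => (starRingEnd ℂ) (f q)) p v = (starRingEnd ℂ) (fderiv ℝ f p v) := by
  have h : HasFDerivAt (fun q => (starRingEnd ℂ) (f q))
      ((Complex.conjCLE.toContinuousLinearMap).comp (fderiv ℝ f p)) p :=
    Complex.conjCLE.toContinuousLinearMap.hasFDerivAt.comp p hf.hasFDerivAt
  rw [h.fderiv]; rfl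

private lemma diff_conj {f : Spt → ℂ} {p : Spt} (hf : DifferentiableAt ℝ f p) :
    DifferentiableAt ℝ (fun q => (starRingEnd ℂ) (f q)) p := by
  have h : HasFDerivAt (fun q => (starRingEnd ℂ) (f q))
      ((Complex.conjCLE.toContinuousLinearMap).comp (fderiv ℝ f p)) p :=
    Complex.conjCLE.toContinuousLinearMap.hasFDerivAt.comp p hf.hasFDerivAt
  exact h.differentiableAt

private lemma pd_re {f : Spt → ℂ} {p : Spt} (hf : DifferentiableAt ℝ f p) (v : Spt) :
    fderiv ℝ (fun q => (f q).re) p v = (fderiv ℝ f p v).re := by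
  have h : HasFDerivAt (fun q => (f q).re) (Complex.reCLM.comp (fderiv ℝ f p)) p :=
    Complex.reCLM.hasFDerivAt.comp p hf.hasFDerivAt
  rw [h.fderiv]; rfl

private lemma pd_mul {f g : Spt → ℂ} {p : Spt} (hf : DifferentiableAt ℝ f p)
    (hg : DifferentiableAt ℝ g p) (v : Spt) :
    fderiv ℝ (fun q => f q * g q) p v = fderiv ℝ f p v * g p + f p * fderiv ℝ g p v := by
  rw [(hf.hasFDerivAt.fun_mul hg.hasFDerivAt).fderiv]
  simp [smul_eq_mul]; ring

private lemma pd_normSq {f : Spt → ℂ} {p : Spt} (hf : DifferentiableAt ℝ f p) (v : Spt) :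
    fderiv ℝ (fun q => Complex.normSq (f q)) p v
      = 2 * ((starRingEnd ℂ) (f p) * fderiv ℝ f p v).re := by
  have hre : HasFDerivAt (fun q => (f q).re) (Complex.reCLM.comp (fderiv ℝ f p)) p :=
    Complex.reCLM.hasFDerivAt.comp p hf.hasFDerivAt
  have him : HasFDerivAt (fun q => (f q).im) (Complex.imCLM.comp (fderiv ℝ f p)) p :=
    Complex.imCLM.hasFDerivAt.comp p hf.hasFDerivAt
  have h : (fun q => Complex.normSq (f q))
      = fun q => (f q).re * (f q).re + (f q).im * (f q).im := by
    funext q; rw [Complex.normSq_apply]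
  have H := ((hre.fun_mul hre).fun_add (him.fun_mul him)).fderiv
  rw [h, H]
  simp [smul_eq_mul, Complex.mul_re, Complex.conj_re, Complex.conj_im]
  ring

private lemma diff_normSq {f : Spt → ℂ} {p : Spt} (hf : DifferentiableAt ℝ f p) :
    DifferentiableAt ℝ (fun q => Complex.normSq (f q)) p := by
  have hre : HasFDerivAt (fun q => (f q).re) (Complex.reCLM.comp (fderiv ℝ f p)) p :=
    Complex.reCLM.hasFDerivAt.comp p hf.hasFDerivAt
  have him : HasFDerivAt (fun q => (f q).im) (Complex.imCLM.comp (fderiv ℝ f p)) p :=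
    Complex.imCLM.hasFDerivAt.comp p hf.hasFDerivAt
  have h : (fun q => Complex.normSq (f q))
      = fun q => (f q).re * (f q).re + (f q).im * (f q).im := by
    funext q; rw [Complex.normSq_apply]
  rw [h]
  exact ((hre.mul hre).add (him.mul him)).differentiableAt

private lemma pd_rpow {g : Spt → ℝ} {p : Spt} (hg : DifferentiableAt ℝ g p) {c : ℝ}
    (hc : 1 ≤ c) (v : Spt) :
    fderiv ℝ (fun q => g q ^ c) p v = c * g p ^ (c - 1) * fderiv ℝ g p v := by
  rw [(hg.hasFDerivAt.rpow_const (Or.inr hc)).fderiv]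
  simp [smul_eq_mul]

private lemma diff_rpow {g : Spt → ℝ} {p : Spt} (hg : DifferentiableAt ℝ g p) {c : ℝ}
    (hc : 1 ≤ c) : DifferentiableAt ℝ (fun q => g q ^ c) p :=
  (hg.hasFDerivAt.rpow_const (Or.inr hc)).differentiableAt

-- covariant-derivative shaped functions
private lemma diff_cov {f g : Spt → ℂ} {B : Spt → ℝ} (c : ℂ) {p : Spt}
    (hf : DifferentiableAt ℝ f p) (hg : DifferentiableAt ℝ g p)
    (hB : DifferentiableAt ℝ B p) :
    DifferentiableAt ℝ (fun q => f q - c * ((B q : ℝ) : ℂ) * g q) p := by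
  have hB' : DifferentiableAt ℝ (fun q => ((B q : ℝ) : ℂ)) p :=
    Complex.ofRealCLM.differentiableAt.comp p hB
  exact hf.sub (((hB'.const_mul c).mul hg))

private lemma pd_cov {f g : Spt → ℂ} {B : Spt → ℝ} (c : ℂ) {p : Spt}
    (hf : DifferentiableAt ℝ f p) (hg : DifferentiableAt ℝ g p)
    (hB : DifferentiableAt ℝ B p) (v : Spt) :
    fderiv ℝ (fun q => f q - c * ((B q : ℝ) : ℂ) * g q) p v
      = fderiv ℝ f p v - c * ((fderiv ℝ B p v : ℝ) : ℂ) * g p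
        - c * ((B p : ℝ) : ℂ) * fderiv ℝ g p v := by
  have hB' : DifferentiableAt ℝ (fun q => ((B q : ℝ) : ℂ)) p :=
    Complex.ofRealCLM.differentiableAt.comp p hB
  have h1 : fderiv ℝ (fun q => (c * ((B q : ℝ) : ℂ)) * g q) p v
      = (c * ((fderiv ℝ B p v : ℝ) : ℂ)) * g p + (c * ((B p : ℝ) : ℂ)) * fderiv ℝ g p v := by
    rw [pd_mul (hB'.const_mul c) hg v]
    have h2 : fderiv ℝ (fun q => c * ((B q : ℝ) : ℂ)) p v
        = c * ((fderiv ℝ B p v : ℝ) : ℂ) := by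
      rw [fderiv_const_mul hB' c]
      simp [pd_ofReal hB v]
    rw [h2]
  rw [fderiv_fun_sub hf ((hB'.const_mul c).fun_mul hg)]
  simp only [ContinuousLinearMap.coe_sub', Pi.sub_apply]
  rw [h1]; ring


private lemma pd_addR {f g : Spt → ℝ} {p : Spt} (hf : DifferentiableAt ℝ f p)
    (hg : DifferentiableAt ℝ g p) (v : Spt) :
    fderiv ℝ (fun q => f q + g q) p v = fderiv ℝ f p v + fderiv ℝ g p v := by
  rw [fderiv_fun_add hf hg]; simp

private lemma pd_cmulR {f : Spt → ℝ} {p : Spt} (hf : DifferentiableAt ℝ f p) (c : ℝ) (v : Spt) :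
    fderiv ℝ (fun q => c * f q) p v = c * fderiv ℝ f p v := by
  rw [fderiv_const_mul hf c]; simp

private lemma diff_divR {f : Spt → ℝ} {p : Spt} (hf : DifferentiableAt ℝ f p) (c : ℝ) :
    DifferentiableAt ℝ (fun q => f q / c) p := by
  have h : (fun q => f q / c) = fun q => c⁻¹ * f q := by
    funext q; rw [div_eq_inv_mul]
  rw [h]; exact hf.const_mul _

private lemma pd_divR {f : Spt → ℝ} {p : Spt} (hf : DifferentiableAt ℝ f p) (c : ℝ) (v : Spt) :
    fderiv ℝ (fun q => f q / c) p v = fderiv ℝ f p v / c := by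
  have h : (fun q => f q / c) = fun q => c⁻¹ * f q := by
    funext q; rw [div_eq_inv_mul]
  rw [h, fderiv_const_mul hf c⁻¹]; simp [div_eq_inv_mul]


lemma key_alg (eps d1 P K2 A0 A1 A2 a1t a2t a01 a02 : ℝ)
    (heps : eps ≠ 0)
    (ψ0 ψt ψ1 ψ2 s1t s2t bt c11 c22 : ℂ)
    (b c1 c2 b1 b2 c1t c2t : ℂ)
    (hb : b = ψt - Complex.I * ((eps⁻¹ : ℝ) : ℂ) * ((A0 : ℝ) : ℂ) * ψ0)
    (hc1 : c1 = ψ1 - Complex.I * ((d1 : ℝ) : ℂ) * ((A1 : ℝ) : ℂ) * ψ0)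
    (hc2 : c2 = ψ2 - Complex.I * ((d1 : ℝ) : ℂ) * ((A2 : ℝ) : ℂ) * ψ0)
    (hc1t : c1t = s1t - Complex.I * ((d1 : ℝ) : ℂ) * (((a1t : ℝ) : ℂ) * ψ0 + ((A1 : ℝ) : ℂ) * ψt))
    (hc2t : c2t = s2t - Complex.I * ((d1 : ℝ) : ℂ) * (((a2t : ℝ) : ℂ) * ψ0 + ((A2 : ℝ) : ℂ) * ψt))
    (hb1 : b1 = s1t - Complex.I * ((eps⁻¹ : ℝ) : ℂ) * (((a01 : ℝ) : ℂ) * ψ0 + ((A0 : ℝ) : ℂ) * ψ1))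
    (hb2 : b2 = s2t - Complex.I * ((eps⁻¹ : ℝ) : ℂ) * (((a02 : ℝ) : ℂ) * ψ0 + ((A0 : ℝ) : ℂ) * ψ2))
    (h1 : Complex.I * (eps : ℂ) * b
        - ((P / 2 : ℝ) : ℂ) * (bt - Complex.I * ((eps⁻¹ : ℝ) : ℂ) * ((A0 : ℝ) : ℂ) * b)
        + ((eps ^ 2 / 2 : ℝ) : ℂ) *
            ((c11 - Complex.I * ((d1 : ℝ) : ℂ) * ((A1 : ℝ) : ℂ) * c1)
              + (c22 - Complex.I * ((d1 : ℝ) : ℂ) * ((A2 : ℝ) : ℂ) * c2))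
        - ((K2 : ℝ) : ℂ) * ψ0 = 0)
    (h2a : (eps * d1) * a1t - a01 = -(eps * ((starRingEnd ℂ) ψ0 * c2).im))
    (h2b : (eps * d1) * a2t - a02 = eps * ((starRingEnd ℂ) ψ0 * c1).im) :
    P * ((starRingEnd ℂ) b * bt).re
      + eps ^ 2 * ((starRingEnd ℂ) c1 * c1t).re
      + eps ^ 2 * ((starRingEnd ℂ) c2 * c2t).re
      + 2 * K2 * ((starRingEnd ℂ) ψ0 * ψt).re
    = eps ^ 2 * (((starRingEnd ℂ) b1 * c1).re + ((starRingEnd ℂ) b * c11).re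
        + ((starRingEnd ℂ) b2 * c2).re + ((starRingEnd ℂ) b * c22).re) := by
  simp only [Complex.ofReal_div, Complex.ofReal_ofNat] at h1
  have e2 : ((P : ℝ) : ℂ) * bt
      = 2 * Complex.I * ((eps : ℝ) : ℂ) * b
        + ((eps ^ 2 : ℝ) : ℂ) *
            ((c11 - Complex.I * ((d1 : ℝ) : ℂ) * ((A1 : ℝ) : ℂ) * c1)
              + (c22 - Complex.I * ((d1 : ℝ) : ℂ) * ((A2 : ℝ) : ℂ) * c2))
        - 2 * ((K2 : ℝ) : ℂ) * ψ0
        + ((P : ℝ) : ℂ) * (Complex.I * ((eps⁻¹ : ℝ) : ℂ) * ((A0 : ℝ) : ℂ) * b) := by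
    linear_combination (-2 : ℂ) * h1
  have key : P * ((starRingEnd ℂ) b * bt).re
      = ((2 * Complex.I * ((eps : ℝ) : ℂ) * b
        + ((eps ^ 2 : ℝ) : ℂ) *
            ((c11 - Complex.I * ((d1 : ℝ) : ℂ) * ((A1 : ℝ) : ℂ) * c1)
              + (c22 - Complex.I * ((d1 : ℝ) : ℂ) * ((A2 : ℝ) : ℂ) * c2))
        - 2 * ((K2 : ℝ) : ℂ) * ψ0
        + ((P : ℝ) : ℂ) * (Complex.I * ((eps⁻¹ : ℝ) : ℂ) * ((A0 : ℝ) : ℂ) * b))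
          * (starRingEnd ℂ) b).re := by
    rw [← e2]
    simp [Complex.mul_re, Complex.mul_im, Complex.ofReal_re, Complex.ofReal_im,
      Complex.conj_re, Complex.conj_im]
    ring
  rw [key]
  subst hb hc1 hc2 hc1t hc2t hb1 hb2
  have ha01 : a01 = eps * d1 * a1t
      + eps * ((starRingEnd ℂ) ψ0 * (ψ2 - Complex.I * ((d1 : ℝ) : ℂ) * ((A2 : ℝ) : ℂ) * ψ0)).im := by
    linarith [h2a]
  have ha02 : a02 = eps * d1 * a2t
      - eps * ((starRingEnd ℂ) ψ0 * (ψ1 - Complex.I * ((d1 : ℝ) : ℂ) * ((A1 : ℝ) : ℂ) * ψ0)).im := by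
    linarith [h2b]
  subst ha01 ha02
  simp only [Complex.mul_re, Complex.mul_im, Complex.add_re, Complex.add_im, Complex.sub_re,
    Complex.sub_im, Complex.I_re, Complex.I_im, Complex.ofReal_re, Complex.ofReal_im,
    Complex.conj_re, Complex.conj_im]
  norm_num
  field_simp
  ring


/-- Local energy balance for the scaled Chern–Simons–Higgs system:
`∂_t((ε^{2+2δ}/2)|D_tψ|² + (ε²/2)(|D₁ψ|² + |D₂ψ|²) + V(|ψ|²))
  = ε²(∂₁ Re(conj(D_tψ) D₁ψ) + ∂₂ Re(conj(D_tψ) D₂ψ))` with `V(s) = s^γ/(γ−1)`. -/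
theorem csh_local_energy_balance (ε δ γ : ℝ) (hε : 0 < ε) (hδ : 0 < δ) (hγ : 1 < γ)
    (ψ : Spt → ℂ) (A₀ A₁ A₂ : Spt → ℝ)
    (hψ : ContDiff ℝ 2 ψ) (hA₀ : ContDiff ℝ 1 A₀)
    (hA₁ : ContDiff ℝ 1 A₁) (hA₂ : ContDiff ℝ 1 A₂)
    (hE1 : ∀ p : Spt,
      Complex.I * (ε : ℂ) * Dt ε A₀ ψ p
        - ((ε ^ (2 + 2 * δ) / 2 : ℝ) : ℂ) * Dt ε A₀ (Dt ε A₀ ψ) p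
        + ((ε ^ 2 / 2 : ℝ) : ℂ) *
            (D1 ε δ A₁ (D1 ε δ A₁ ψ) p + D2 ε δ A₂ (D2 ε δ A₂ ψ) p)
        - ((γ / (γ - 1) * Complex.normSq (ψ p) ^ (γ - 1) : ℝ) : ℂ) * ψ p = 0)
    (hE2a : ∀ p : Spt,
      ε ^ δ * ptd A₁ p - px1 A₀ p
        = -(ε * ((starRingEnd ℂ) (ψ p) * D2 ε δ A₂ ψ p).im))
    (hE2b : ∀ p : Spt,
      ε ^ δ * ptd A₂ p - px2 A₀ p
        = ε * ((starRingEnd ℂ) (ψ p) * D1 ε δ A₁ ψ p).im) :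
    ∀ p : Spt,
      ptd (fun q => ε ^ (2 + 2 * δ) / 2 * Complex.normSq (Dt ε A₀ ψ q)
            + ε ^ 2 / 2 * (Complex.normSq (D1 ε δ A₁ ψ q) + Complex.normSq (D2 ε δ A₂ ψ q))
            + Complex.normSq (ψ q) ^ γ / (γ - 1)) p
        = ε ^ 2 *
            (px1 (fun q => ((starRingEnd ℂ) (Dt ε A₀ ψ q) * D1 ε δ A₁ ψ q).re) p
              + px2 (fun q => ((starRingEnd ℂ) (Dt ε A₀ ψ q) * D2 ε δ A₂ ψ q).re) p) := by
  intro p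
  have hψd : ∀ q, DifferentiableAt ℝ ψ q := fun q => (hψ.differentiable two_ne_zero) q
  have hA₀d : ∀ q, DifferentiableAt ℝ A₀ q := fun q => (hA₀.differentiable one_ne_zero) q
  have hA₁d : ∀ q, DifferentiableAt ℝ A₁ q := fun q => (hA₁.differentiable one_ne_zero) q
  have hA₂d : ∀ q, DifferentiableAt ℝ A₂ q := fun q => (hA₂.differentiable one_ne_zero) q
  have hBd : ∀ q, DifferentiableAt ℝ (Dt ε A₀ ψ) q := fun q =>
    diff_cov (Complex.I * ((ε⁻¹ : ℝ) : ℂ)) (diff_pd hψ (1, 0, 0) q) (hψd q) (hA₀d q)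
  have hC1d : ∀ q, DifferentiableAt ℝ (D1 ε δ A₁ ψ) q := fun q =>
    diff_cov (Complex.I * ((ε ^ (δ - 1) : ℝ) : ℂ)) (diff_pd hψ (0, 1, 0) q) (hψd q) (hA₁d q)
  have hC2d : ∀ q, DifferentiableAt ℝ (D2 ε δ A₂ ψ) q := fun q =>
    diff_cov (Complex.I * ((ε ^ (δ - 1) : ℝ) : ℂ)) (diff_pd hψ (0, 0, 1) q) (hψd q) (hA₂d q)
  -- covariant-derivative expansions
  have hDteq : Dt ε A₀ ψ = (fun q => (fun r => fderiv ℝ ψ r (1, 0, 0)) q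
      - Complex.I * ((ε⁻¹ : ℝ) : ℂ) * ((A₀ q : ℝ) : ℂ) * ψ q) := rfl
  have hD1eq : D1 ε δ A₁ ψ = (fun q => (fun r => fderiv ℝ ψ r (0, 1, 0)) q
      - Complex.I * ((ε ^ (δ - 1) : ℝ) : ℂ) * ((A₁ q : ℝ) : ℂ) * ψ q) := rfl
  have hD2eq : D2 ε δ A₂ ψ = (fun q => (fun r => fderiv ℝ ψ r (0, 0, 1)) q
      - Complex.I * ((ε ^ (δ - 1) : ℝ) : ℂ) * ((A₂ q : ℝ) : ℂ) * ψ q) := rfl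
  have hbt : fderiv ℝ (Dt ε A₀ ψ) p (1, 0, 0) = fderiv ℝ (fun r => fderiv ℝ ψ r (1, 0, 0)) p (1, 0, 0)
      - Complex.I * ((ε⁻¹ : ℝ) : ℂ) * ((fderiv ℝ A₀ p (1, 0, 0) : ℝ) : ℂ) * ψ p
      - Complex.I * ((ε⁻¹ : ℝ) : ℂ) * ((A₀ p : ℝ) : ℂ) * fderiv ℝ ψ p (1, 0, 0) := by
    rw [hDteq]
    exact pd_cov (Complex.I * ((ε⁻¹ : ℝ) : ℂ)) (diff_pd hψ (1, 0, 0) p) (hψd p) (hA₀d p) (1, 0, 0)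
  have hb1 : fderiv ℝ (Dt ε A₀ ψ) p (0, 1, 0) = fderiv ℝ (fun r => fderiv ℝ ψ r (1, 0, 0)) p (0, 1, 0)
      - Complex.I * ((ε⁻¹ : ℝ) : ℂ) * ((fderiv ℝ A₀ p (0, 1, 0) : ℝ) : ℂ) * ψ p
      - Complex.I * ((ε⁻¹ : ℝ) : ℂ) * ((A₀ p : ℝ) : ℂ) * fderiv ℝ ψ p (0, 1, 0) := by
    rw [hDteq]
    exact pd_cov (Complex.I * ((ε⁻¹ : ℝ) : ℂ)) (diff_pd hψ (1, 0, 0) p) (hψd p) (hA₀d p) (0, 1, 0)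
  have hb2 : fderiv ℝ (Dt ε A₀ ψ) p (0, 0, 1) = fderiv ℝ (fun r => fderiv ℝ ψ r (1, 0, 0)) p (0, 0, 1)
      - Complex.I * ((ε⁻¹ : ℝ) : ℂ) * ((fderiv ℝ A₀ p (0, 0, 1) : ℝ) : ℂ) * ψ p
      - Complex.I * ((ε⁻¹ : ℝ) : ℂ) * ((A₀ p : ℝ) : ℂ) * fderiv ℝ ψ p (0, 0, 1) := by
    rw [hDteq]
    exact pd_cov (Complex.I * ((ε⁻¹ : ℝ) : ℂ)) (diff_pd hψ (1, 0, 0) p) (hψd p) (hA₀d p) (0, 0, 1)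
  have hc1t : fderiv ℝ (D1 ε δ A₁ ψ) p (1, 0, 0) = fderiv ℝ (fun r => fderiv ℝ ψ r (0, 1, 0)) p (1, 0, 0)
      - Complex.I * ((ε ^ (δ - 1) : ℝ) : ℂ) * ((fderiv ℝ A₁ p (1, 0, 0) : ℝ) : ℂ) * ψ p
      - Complex.I * ((ε ^ (δ - 1) : ℝ) : ℂ) * ((A₁ p : ℝ) : ℂ) * fderiv ℝ ψ p (1, 0, 0) := by
    rw [hD1eq]
    exact pd_cov (Complex.I * ((ε ^ (δ - 1) : ℝ) : ℂ)) (diff_pd hψ (0, 1, 0) p) (hψd p) (hA₁d p) (1, 0, 0)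
  have hc11 : fderiv ℝ (D1 ε δ A₁ ψ) p (0, 1, 0) = fderiv ℝ (fun r => fderiv ℝ ψ r (0, 1, 0)) p (0, 1, 0)
      - Complex.I * ((ε ^ (δ - 1) : ℝ) : ℂ) * ((fderiv ℝ A₁ p (0, 1, 0) : ℝ) : ℂ) * ψ p
      - Complex.I * ((ε ^ (δ - 1) : ℝ) : ℂ) * ((A₁ p : ℝ) : ℂ) * fderiv ℝ ψ p (0, 1, 0) := by
    rw [hD1eq]
    exact pd_cov (Complex.I * ((ε ^ (δ - 1) : ℝ) : ℂ)) (diff_pd hψ (0, 1, 0) p) (hψd p) (hA₁d p) (0, 1, 0)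
  have hc2t : fderiv ℝ (D2 ε δ A₂ ψ) p (1, 0, 0) = fderiv ℝ (fun r => fderiv ℝ ψ r (0, 0, 1)) p (1, 0, 0)
      - Complex.I * ((ε ^ (δ - 1) : ℝ) : ℂ) * ((fderiv ℝ A₂ p (1, 0, 0) : ℝ) : ℂ) * ψ p
      - Complex.I * ((ε ^ (δ - 1) : ℝ) : ℂ) * ((A₂ p : ℝ) : ℂ) * fderiv ℝ ψ p (1, 0, 0) := by
    rw [hD2eq]
    exact pd_cov (Complex.I * ((ε ^ (δ - 1) : ℝ) : ℂ)) (diff_pd hψ (0, 0, 1) p) (hψd p) (hA₂d p) (1, 0, 0)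
  -- symmetry of second derivatives
  have hsym1 : fderiv ℝ (fun r => fderiv ℝ ψ r (1, 0, 0)) p (0, 1, 0) = fderiv ℝ (fun r => fderiv ℝ ψ r (0, 1, 0)) p (1, 0, 0) :=
    pd_symm hψ p (1, 0, 0) (0, 1, 0)
  have hsym2 : fderiv ℝ (fun r => fderiv ℝ ψ r (1, 0, 0)) p (0, 0, 1) = fderiv ℝ (fun r => fderiv ℝ ψ r (0, 0, 1)) p (1, 0, 0) :=
    pd_symm hψ p (1, 0, 0) (0, 0, 1)
  rw [hsym1] at hb1
  rw [hsym2] at hb2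
  -- power identity
  have hpow : ε * ε ^ (δ - 1) = ε ^ δ := by
    have h := Real.rpow_add hε 1 (δ - 1)
    rw [Real.rpow_one] at h
    rw [← h]
    congr 1
    ring
  -- hypotheses of key_alg
  have h2a : (ε * ε ^ (δ - 1)) * fderiv ℝ A₁ p (1, 0, 0) - fderiv ℝ A₀ p (0, 1, 0)
      = -(ε * ((starRingEnd ℂ) (ψ p) * D2 ε δ A₂ ψ p).im) := by
    rw [hpow]; exact hE2a p
  have h2b : (ε * ε ^ (δ - 1)) * fderiv ℝ A₂ p (1, 0, 0) - fderiv ℝ A₀ p (0, 0, 1)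
      = ε * ((starRingEnd ℂ) (ψ p) * D1 ε δ A₁ ψ p).im := by
    rw [hpow]; exact hE2b p
  have KEY := key_alg ε (ε ^ (δ - 1)) (ε ^ (2 + 2 * δ)) (γ / (γ - 1) * Complex.normSq (ψ p) ^ (γ - 1))
      (A₀ p) (A₁ p) (A₂ p) (fderiv ℝ A₁ p (1, 0, 0)) (fderiv ℝ A₂ p (1, 0, 0)) (fderiv ℝ A₀ p (0, 1, 0)) (fderiv ℝ A₀ p (0, 0, 1)) (ne_of_gt hε)
      (ψ p) (fderiv ℝ ψ p (1, 0, 0)) (fderiv ℝ ψ p (0, 1, 0)) (fderiv ℝ ψ p (0, 0, 1)) (fderiv ℝ (fun r => fderiv ℝ ψ r (0, 1, 0)) p (1, 0, 0)) (fderiv ℝ (fun r => fderiv ℝ ψ r (0, 0, 1)) p (1, 0, 0)) (fderiv ℝ (Dt ε A₀ ψ) p (1, 0, 0)) (fderiv ℝ (D1 ε δ A₁ ψ) p (0, 1, 0)) (fderiv ℝ (D2 ε δ A₂ ψ) p (0, 0, 1))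
      (Dt ε A₀ ψ p) (D1 ε δ A₁ ψ p) (D2 ε δ A₂ ψ p) (fderiv ℝ (Dt ε A₀ ψ) p (0, 1, 0)) (fderiv ℝ (Dt ε A₀ ψ) p (0, 0, 1)) (fderiv ℝ (D1 ε δ A₁ ψ) p (1, 0, 0)) (fderiv ℝ (D2 ε δ A₂ ψ) p (1, 0, 0))
      rfl rfl rfl
      (by rw [hc1t]; ring)
      (by rw [hc2t]; ring)
      (by rw [hb1]; ring)
      (by rw [hb2]; ring)
      (hE1 p) h2a h2b
  -- LHS expansion
  have hL : ptd (fun q => ε ^ (2 + 2 * δ) / 2 * Complex.normSq (Dt ε A₀ ψ q)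
            + ε ^ 2 / 2 * (Complex.normSq (D1 ε δ A₁ ψ q) + Complex.normSq (D2 ε δ A₂ ψ q))
            + Complex.normSq (ψ q) ^ γ / (γ - 1)) p
      = ε ^ (2 + 2 * δ) * ((starRingEnd ℂ) (Dt ε A₀ ψ p) * fderiv ℝ (Dt ε A₀ ψ) p (1, 0, 0)).re
        + ε ^ 2 * ((starRingEnd ℂ) (D1 ε δ A₁ ψ p) * fderiv ℝ (D1 ε δ A₁ ψ) p (1, 0, 0)).re
        + ε ^ 2 * ((starRingEnd ℂ) (D2 ε δ A₂ ψ p) * fderiv ℝ (D2 ε δ A₂ ψ) p (1, 0, 0)).re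
        + 2 * (γ / (γ - 1) * Complex.normSq (ψ p) ^ (γ - 1)) * ((starRingEnd ℂ) (ψ p) * fderiv ℝ ψ p (1, 0, 0)).re := by
    have d1 : DifferentiableAt ℝ (fun q => ε ^ (2 + 2 * δ) / 2 * Complex.normSq (Dt ε A₀ ψ q)) p :=
      (diff_normSq (hBd p)).const_mul _
    have d2 : DifferentiableAt ℝ
        (fun q => ε ^ 2 / 2 * (Complex.normSq (D1 ε δ A₁ ψ q) + Complex.normSq (D2 ε δ A₂ ψ q))) p :=
      ((diff_normSq (hC1d p)).add (diff_normSq (hC2d p))).const_mul _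
    have d3 : DifferentiableAt ℝ (fun q => Complex.normSq (ψ q) ^ γ / (γ - 1)) p :=
      diff_divR (diff_rpow (diff_normSq (hψd p)) hγ.le) _
    show fderiv ℝ (fun q => (ε ^ (2 + 2 * δ) / 2 * Complex.normSq (Dt ε A₀ ψ q)
            + ε ^ 2 / 2 * (Complex.normSq (D1 ε δ A₁ ψ q) + Complex.normSq (D2 ε δ A₂ ψ q)))
            + Complex.normSq (ψ q) ^ γ / (γ - 1)) p (1, 0, 0) = _
    rw [pd_addR (d1.fun_add d2) d3 (1, 0, 0), pd_addR d1 d2 (1, 0, 0)]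
    rw [pd_cmulR (diff_normSq (hBd p)) (ε ^ (2 + 2 * δ) / 2) (1, 0, 0)]
    rw [pd_cmulR ((diff_normSq (hC1d p)).fun_add (diff_normSq (hC2d p))) (ε ^ 2 / 2) (1, 0, 0)]
    rw [pd_addR (diff_normSq (hC1d p)) (diff_normSq (hC2d p)) (1, 0, 0)]
    rw [pd_divR (diff_rpow (diff_normSq (hψd p)) hγ.le) (γ - 1) (1, 0, 0)]
    rw [pd_rpow (diff_normSq (hψd p)) hγ.le (1, 0, 0)]
    rw [pd_normSq (hBd p) (1, 0, 0), pd_normSq (hC1d p) (1, 0, 0),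
      pd_normSq (hC2d p) (1, 0, 0), pd_normSq (hψd p) (1, 0, 0)]
    ring
  -- RHS expansions
  have hR1 : px1 (fun q => ((starRingEnd ℂ) (Dt ε A₀ ψ q) * D1 ε δ A₁ ψ q).re) p
      = ((starRingEnd ℂ) (fderiv ℝ (Dt ε A₀ ψ) p (0, 1, 0)) * D1 ε δ A₁ ψ p).re + ((starRingEnd ℂ) (Dt ε A₀ ψ p) * fderiv ℝ (D1 ε δ A₁ ψ) p (0, 1, 0)).re := by
    show fderiv ℝ (fun q => ((starRingEnd ℂ) (Dt ε A₀ ψ q) * D1 ε δ A₁ ψ q).re) p (0, 1, 0) = _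
    rw [pd_re ((diff_conj (hBd p)).fun_mul (hC1d p)) (0, 1, 0),
      pd_mul (diff_conj (hBd p)) (hC1d p) (0, 1, 0), pd_conj (hBd p) (0, 1, 0), Complex.add_re]
  have hR2 : px2 (fun q => ((starRingEnd ℂ) (Dt ε A₀ ψ q) * D2 ε δ A₂ ψ q).re) p
      = ((starRingEnd ℂ) (fderiv ℝ (Dt ε A₀ ψ) p (0, 0, 1)) * D2 ε δ A₂ ψ p).re + ((starRingEnd ℂ) (Dt ε A₀ ψ p) * fderiv ℝ (D2 ε δ A₂ ψ) p (0, 0, 1)).re := by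
    show fderiv ℝ (fun q => ((starRingEnd ℂ) (Dt ε A₀ ψ q) * D2 ε δ A₂ ψ q).re) p (0, 0, 1) = _
    rw [pd_re ((diff_conj (hBd p)).fun_mul (hC2d p)) (0, 0, 1),
      pd_mul (diff_conj (hBd p)) (hC2d p) (0, 0, 1), pd_conj (hBd p) (0, 0, 1), Complex.add_re]
  rw [hL, hR1, hR2]
  linarith [KEY]

end
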